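/- For every ε ∈ (0,1), the Lévy distance between μ_ε = (ε/2)δ_{-√(1+ε)} + (1/2 - ε)δ_{-1} + (ε/2)δ_{-√(1-ε)} + (ε/2)δ_{√(1-ε)} + (1/2 - ε)δ_{1} + (ε/2)δ_{√(1+ε)} and the Bernoulli distribution b = (1/2)δ_{-1} + (1/2)δ_1 is at least ε/4. -/

import Mathlib

open MeasureTheory ProbabilityTheory Set
open scoped ENNReal

/-- The Lévy distance between two probability measures on ℝ, defined via their
cumulative distribution functions. -/
noncomputable def levyDist (μ ν : Measure ℝ) : ℝ :=
  sInf {ε : ℝ | 0 < ε ∧ ∀ x : ℝ,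
    cdf μ (x - ε) - ε ≤ cdf ν x ∧ cdf ν x ≤ cdf μ (x + ε) + ε}

/-- The symmetric Bernoulli distribution `b = (1/2)δ₋₁ + (1/2)δ₁`. -/
noncomputable def bern : Measure ℝ :=
  (2 : ℝ≥0∞)⁻¹ • Measure.dirac (-1) + (2 : ℝ≥0∞)⁻¹ • Measure.dirac 1

lemma ofReal_cdf_mul (μ : Measure ℝ) [IsFiniteMeasure μ] (x : ℝ) :
    ENNReal.ofReal (cdf μ x) * μ Set.univ = μ (Set.Iic x) := by
  have h := lintegral_condCDF ((Measure.dirac Unit.unit).prod μ) x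
  rw [lintegral_unique] at h
  have hfst : ((Measure.dirac Unit.unit).prod μ).fst Set.univ = μ Set.univ := by
    rw [Measure.fst_apply MeasurableSet.univ, Set.preimage_univ, ← Set.univ_prod_univ,
      Measure.prod_prod, measure_univ, one_mul]
  have hprod : ((Measure.dirac Unit.unit).prod μ) (Set.univ ×ˢ Set.Iic x) = μ (Set.Iic x) := by
    rw [Measure.prod_prod, measure_univ, one_mul]
  rw [hfst, hprod] at h
  exact h

instance : IsProbabilityMeasure bern := by
  constructor
  simp [bern, Measure.add_apply]
  rw [ENNReal.inv_two_add_inv_two]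

theorem levy_dist_mu_eps_ge (ε : ℝ) (hε : ε ∈ Ioo (0 : ℝ) 1) (μ : Measure ℝ)
    (hμ : μ = ENNReal.ofReal (ε / 2) • Measure.dirac (-Real.sqrt (1 + ε))
        + ENNReal.ofReal (1 / 2 - ε) • Measure.dirac (-1)
        + ENNReal.ofReal (ε / 2) • Measure.dirac (-Real.sqrt (1 - ε))
        + ENNReal.ofReal (ε / 2) • Measure.dirac (Real.sqrt (1 - ε))
        + ENNReal.ofReal (1 / 2 - ε) • Measure.dirac 1
        + ENNReal.ofReal (ε / 2) • Measure.dirac (Real.sqrt (1 + ε))) :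
    levyDist μ bern ≥ ε / 4 := by
  obtain ⟨hε0, hε1⟩ := hε
  set s := Real.sqrt (1 - ε) with hs
  have hs0 : 0 ≤ s := Real.sqrt_nonneg _
  have hs1 : s ≤ 1 - ε / 2 := by
    have : Real.sqrt (1 - ε) ≤ Real.sqrt ((1 - ε / 2) ^ 2) := by
      apply Real.sqrt_le_sqrt; nlinarith
    rwa [Real.sqrt_sq (by linarith)] at this
  have hslt1 : s < 1 := by linarith
  have hsqrt1 : (1 : ℝ) < Real.sqrt (1 + ε) := by
    nlinarith [Real.sq_sqrt (show (0:ℝ) ≤ 1 + ε by linarith), Real.sqrt_nonneg (1 + ε)]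
  -- compute μ (Iic s) and μ univ
  have hIic : μ (Set.Iic s) = ENNReal.ofReal (ε / 2) + ENNReal.ofReal (1 / 2 - ε)
      + ENNReal.ofReal (ε / 2) + ENNReal.ofReal (ε / 2) := by
    rw [hμ]
    simp only [Measure.add_apply, Measure.smul_apply, smul_eq_mul,
      Measure.dirac_apply' _ measurableSet_Iic]
    rw [Set.indicator_of_mem (by simp only [Set.mem_Iic]; nlinarith [Real.sqrt_nonneg (1+ε)]),
      Set.indicator_of_mem (by simp only [Set.mem_Iic]; linarith),
      Set.indicator_of_mem (by simp only [Set.mem_Iic]; linarith),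
      Set.indicator_of_mem (by simp only [Set.mem_Iic]; linarith),
      Set.indicator_of_notMem (by simp only [Set.mem_Iic]; push_neg; linarith),
      Set.indicator_of_notMem (by simp only [Set.mem_Iic]; push_neg; linarith)]
    simp only [Pi.one_apply, mul_one]
    ring
  have huniv : μ Set.univ = ENNReal.ofReal (ε / 2) + ENNReal.ofReal (1 / 2 - ε)
      + ENNReal.ofReal (ε / 2) + ENNReal.ofReal (ε / 2) + ENNReal.ofReal (1 / 2 - ε)
      + ENNReal.ofReal (ε / 2) := by
    rw [hμ]
    simp only [Measure.add_apply, Measure.smul_apply, smul_eq_mul, Measure.dirac_apply' _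
      MeasurableSet.univ, Set.indicator_of_mem (Set.mem_univ _)]
    try simp only [Pi.one_apply, mul_one]
    try ring
  have hfin : IsFiniteMeasure μ := by
    constructor
    rw [huniv]
    exact lt_of_le_of_lt (le_refl _) (by
      repeat' apply ENNReal.add_lt_top.mpr ⟨?_, ?_⟩
      all_goals exact ENNReal.ofReal_lt_top)
  -- cdf lower bound
  have hcdfμ : 1 / 2 + ε / 4 ≤ cdf μ s := by
    have key := ofReal_cdf_mul μ s
    rcases le_or_gt ε (1 / 2) with hc | hc
    · -- probability case
      have huniv1 : μ Set.univ = 1 := by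
        rw [huniv, ← ENNReal.ofReal_add (by linarith) (by linarith),
          ← ENNReal.ofReal_add (by linarith) (by linarith),
          ← ENNReal.ofReal_add (by linarith) (by linarith),
          ← ENNReal.ofReal_add (by linarith) (by linarith),
          ← ENNReal.ofReal_add (by linarith) (by linarith)]
        rw [show ε / 2 + (1 / 2 - ε) + ε / 2 + ε / 2 + (1 / 2 - ε) + ε / 2 = 1 by ring,
          ENNReal.ofReal_one]
      rw [huniv1, mul_one, hIic, ← ENNReal.ofReal_add (by linarith) (by linarith),
        ← ENNReal.ofReal_add (by linarith) (by linarith),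
        ← ENNReal.ofReal_add (by linarith) (by linarith)] at key
      have := (ENNReal.ofReal_eq_ofReal_iff (cdf_nonneg μ s) (by linarith)).mp key
      linarith
    · -- not a probability measure: mass 2ε
      have hz : ENNReal.ofReal (1 / 2 - ε) = 0 := by
        rw [ENNReal.ofReal_eq_zero]; linarith
      rw [hIic, hz, add_zero, ← ENNReal.ofReal_add (by linarith) (by linarith),
        ← ENNReal.ofReal_add (by linarith) (by linarith)] at key
      rw [huniv, hz, add_zero, add_zero, ← ENNReal.ofReal_add (by linarith) (by linarith),
        ← ENNReal.ofReal_add (by linarith) (by linarith),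
        ← ENNReal.ofReal_add (by linarith) (by linarith)] at key
      rw [← ENNReal.ofReal_mul (cdf_nonneg μ s)] at key
      have heq := (ENNReal.ofReal_eq_ofReal_iff
        (mul_nonneg (cdf_nonneg μ s) (by linarith)) (by linarith)).mp key
      have hval : cdf μ s = 3 / 4 := by
        refine mul_right_cancel₀ (show (2 * ε : ℝ) ≠ 0 by positivity) ?_
        linear_combination heq
      rw [hval]; linarith
  -- cdf of bern on [-1, 1)
  have hcdfb : ∀ x : ℝ, -1 ≤ x → x < 1 → cdf bern x = 1 / 2 := by
    intro x hx1 hx2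
    rw [cdf_eq_real, measureReal_def]
    have : bern (Set.Iic x) = 2⁻¹ := by
      rw [bern]
      simp only [Measure.add_apply, Measure.smul_apply, smul_eq_mul,
        Measure.dirac_apply' _ measurableSet_Iic]
      rw [Set.indicator_of_mem (by simpa using hx1),
        Set.indicator_of_notMem (by simp only [Set.mem_Iic]; push_neg; exact hx2)]
      simp
    rw [this]
    simp [ENNReal.toReal_inv]
  -- main argument
  rw [levyDist, ge_iff_le]
  apply le_csInf
  · refine ⟨2, by norm_num, fun x => ⟨?_, ?_⟩⟩
    · linarith [cdf_le_one μ (x - 2), cdf_nonneg bern x]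
    · linarith [cdf_nonneg μ (x + 2), cdf_le_one bern x]
  · rintro δ ⟨hδ0, hδ⟩
    by_contra hcon
    push_neg at hcon
    have hx := (hδ (s + δ)).1
    rw [add_sub_cancel_right] at hx
    rw [hcdfb (s + δ) (by linarith) (by linarith)] at hx
    linarith
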